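/- Let f be convex and differentiable, g_s(x) = f(x) + (μ_s/2)‖x − x₀‖² and g_{s+1}(x) = f(x) + (μ_{s+1}/2)‖x − x₀‖² with 0 < μ_{s+1} ≤ μ_s, and let x̃*_s be the minimizer of g_s and x* a minimizer of f. Then for any point x̃, ‖∇g_{s+1}(x̃)‖² ≤ 3‖∇g_s(x̃)‖² + (3(μ_s − μ_{s+1})²/μ_s²)‖∇g_s(x̃)‖² + 12(μ_s − μ_{s+1})²‖x* − x₀‖². -/

import Mathlib

open RealInnerProductSpace

theorem grad_ineq {E : Type*} [NormedAddCommGroup E] [InnerProductSpace ℝ E] [CompleteSpace E]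
    (f : E → ℝ) (hcvx : ConvexOn ℝ Set.univ f) (x y : E) (g : E)
    (hg : HasGradientAt f g x) : f x + ⟪g, y - x⟫ ≤ f y := by
  set φ : ℝ → ℝ := f ∘ (AffineMap.lineMap x y) with hφ
  have hline : HasDerivAt (fun t : ℝ => (AffineMap.lineMap x y) t) (y - x) 0 := by
    simp only [AffineMap.lineMap_apply_module]
    have heq : (fun t : ℝ => t • (y - x) + x) = fun t : ℝ => (1 - t) • x + t • y := by
      funext t; module
    simpa [heq] using (((hasDerivAt_id (0:ℝ)).smul_const (y - x)).add_const x)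
  have hφd : HasDerivAt φ ⟪g, y - x⟫ 0 := by
    have h1 : HasFDerivAt f (InnerProductSpace.toDual ℝ E g : E →L[ℝ] ℝ)
        ((AffineMap.lineMap x y) (0:ℝ)) := by
      simpa [AffineMap.lineMap_apply_module] using hasGradientAt_iff_hasFDerivAt.mp hg
    simpa using h1.comp_hasDerivAt (0:ℝ) hline
  have hφc : ConvexOn ℝ Set.univ φ := by
    simpa using hcvx.comp_affineMap (AffineMap.lineMap x y)
  have h2 := hφc.le_slope_of_hasDerivAt (Set.mem_univ (0:ℝ)) (Set.mem_univ (1:ℝ)) one_pos hφd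
  simp [slope, hφ, Function.comp] at h2
  linarith

set_option maxHeartbeats 1000000 in
theorem stmt_16 {d : ℕ} (f : EuclideanSpace ℝ (Fin d) → ℝ)
    (f' : EuclideanSpace ℝ (Fin d) → EuclideanSpace ℝ (Fin d))
    (hcvx : ConvexOn ℝ Set.univ f)
    (hgrad : ∀ x, HasGradientAt f (f' x) x)
    (xstar : EuclideanSpace ℝ (Fin d)) (hmin : ∀ x, f xstar ≤ f x)
    (x₀ : EuclideanSpace ℝ (Fin d)) (μs μs1 : ℝ) (hμ1 : 0 < μs1) (hμ : μs1 ≤ μs)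
    (xtsstar : EuclideanSpace ℝ (Fin d))
    (hgsmin : ∀ x, f xtsstar + μs / 2 * ‖xtsstar - x₀‖ ^ 2 ≤ f x + μs / 2 * ‖x - x₀‖ ^ 2)
    (xt : EuclideanSpace ℝ (Fin d)) :
    ‖f' xt + μs1 • (xt - x₀)‖ ^ 2 ≤
      3 * ‖f' xt + μs • (xt - x₀)‖ ^ 2
      + 3 * (μs - μs1) ^ 2 / μs ^ 2 * ‖f' xt + μs • (xt - x₀)‖ ^ 2
      + 12 * (μs - μs1) ^ 2 * ‖xstar - x₀‖ ^ 2 := by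
  have hμs : (0:ℝ) < μs := lt_of_lt_of_le hμ1 hμ
  set z := xtsstar with hz
  set a := f' xt + μs • (xt - x₀) with ha
  set δ := μs - μs1 with hδ
  have hδ0 : 0 ≤ δ := by simp [hδ]; linarith
  -- gradient of g_s at z is zero
  have hgz : f' z + μs • (z - x₀) = 0 := by
    have hq : HasFDerivAt (fun x : EuclideanSpace ℝ (Fin d) => ‖x - x₀‖ ^ 2)
        (2 • (innerSL ℝ (z - x₀)).comp (ContinuousLinearMap.id ℝ (EuclideanSpace ℝ (Fin d)))) z := by
      have hsub : HasFDerivAt (fun x : EuclideanSpace ℝ (Fin d) => x - x₀)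
          (ContinuousLinearMap.id ℝ (EuclideanSpace ℝ (Fin d))) z :=
        (hasFDerivAt_id z).sub_const x₀
      simpa using hsub.norm_sq
    have hgd : HasFDerivAt (fun x : EuclideanSpace ℝ (Fin d) => f x + μs / 2 * ‖x - x₀‖ ^ 2)
        ((InnerProductSpace.toDual ℝ (EuclideanSpace ℝ (Fin d)) (f' z) : EuclideanSpace ℝ (Fin d) →L[ℝ] ℝ)
          + (μs / 2) • (2 • (innerSL ℝ (z - x₀)).comp (ContinuousLinearMap.id ℝ (EuclideanSpace ℝ (Fin d))))) z :=
      (hasGradientAt_iff_hasFDerivAt.mp (hgrad z)).add (hq.const_mul (μs / 2))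
    have hloc : IsLocalMin (fun x : EuclideanSpace ℝ (Fin d) => f x + μs / 2 * ‖x - x₀‖ ^ 2) z :=
      Filter.Eventually.of_forall hgsmin
    have h0 := hloc.hasFDerivAt_eq_zero hgd
    have h0' : ∀ w : EuclideanSpace ℝ (Fin d), ⟪f' z + μs • (z - x₀), w⟫ = 0 := by
      intro w
      have h0w := congrArg (fun L : EuclideanSpace ℝ (Fin d) →L[ℝ] ℝ => L w) h0
      simp only [ContinuousLinearMap.add_apply, ContinuousLinearMap.smul_apply,
        ContinuousLinearMap.comp_apply, ContinuousLinearMap.id_apply,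
        innerSL_apply_apply, InnerProductSpace.toDual_apply_apply, ContinuousLinearMap.zero_apply,
        smul_eq_mul, nsmul_eq_mul] at h0w
      rw [inner_add_left, real_inner_smul_left]
      push_cast at h0w
      linarith
    have := h0' (f' z + μs • (z - x₀))
    exact inner_self_eq_zero.mp this
  -- monotonicity / strong convexity: μs * ‖xt - z‖ ≤ ‖a‖
  have hkey : μs * ‖xt - z‖ ≤ ‖a‖ := by
    have h1 := grad_ineq f hcvx xt z (f' xt) (hgrad xt)
    have h2 := grad_ineq f hcvx z xt (f' z) (hgrad z)
    have hmono : 0 ≤ ⟪f' xt - f' z, xt - z⟫ := by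
      have : ⟪f' xt - f' z, xt - z⟫ = -(⟪f' xt, z - xt⟫ + ⟪f' z, xt - z⟫) := by
        rw [inner_sub_left]
        have e1 : z - xt = -(xt - z) := by abel
        rw [e1, inner_neg_right]; ring
      rw [this]; linarith
    have hfz : f' z = -(μs • (z - x₀)) := by
      have := hgz; linear_combination (norm := module) this
    have hexp : ⟪f' xt - f' z, xt - z⟫ = ⟪a, xt - z⟫ - μs * ⟪xt - z, xt - z⟫ := by
      rw [hfz, ha]
      rw [sub_neg_eq_add, inner_add_left, inner_add_left, inner_smul_left, inner_smul_left]
      have e2 : (xt - x₀) = (xt - z) + (z - x₀) := by abel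
      rw [e2, inner_add_left]
      simp [RCLike.star_def]
      ring
    have hcs : ⟪a, xt - z⟫ ≤ ‖a‖ * ‖xt - z‖ := real_inner_le_norm a (xt - z)
    have hsq : ⟪xt - z, xt - z⟫ = ‖xt - z‖ ^ 2 := real_inner_self_eq_norm_sq (xt - z)
    have hkey2 : μs * ‖xt - z‖ ^ 2 ≤ ‖a‖ * ‖xt - z‖ := by nlinarith
    rcases eq_or_lt_of_le (norm_nonneg (xt - z)) with h | h
    · rw [← h]; simpa using norm_nonneg a
    · have := le_of_mul_le_mul_right (by nlinarith : μs * ‖xt - z‖ * ‖xt - z‖ ≤ ‖a‖ * ‖xt - z‖) h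
      exact this
  -- ‖z - x₀‖² ≤ ‖xstar - x₀‖²
  have hzx : ‖z - x₀‖ ^ 2 ≤ ‖xstar - x₀‖ ^ 2 := by
    have h1 := hgsmin xstar
    have h2 := hmin z
    nlinarith
  -- decompose v
  have hv : ‖f' xt + μs1 • (xt - x₀)‖ ≤ ‖a‖ + δ * ‖xt - z‖ + δ * ‖z - x₀‖ := by
    have hdec : f' xt + μs1 • (xt - x₀) = a - δ • (xt - z) - δ • (z - x₀) := by
      rw [ha, hδ]; module
    rw [hdec]
    calc ‖a - δ • (xt - z) - δ • (z - x₀)‖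
        ≤ ‖a - δ • (xt - z)‖ + ‖δ • (z - x₀)‖ := norm_sub_le _ _
      _ ≤ ‖a‖ + ‖δ • (xt - z)‖ + ‖δ • (z - x₀)‖ := by
          have := norm_sub_le a (δ • (xt - z)); linarith
      _ = ‖a‖ + δ * ‖xt - z‖ + δ * ‖z - x₀‖ := by
          rw [norm_smul, norm_smul, Real.norm_eq_abs, abs_of_nonneg hδ0]
  -- assemble
  have hvnn := norm_nonneg (f' xt + μs1 • (xt - x₀))
  have hann := norm_nonneg a
  have hpnn := norm_nonneg (xt - z)
  have hqnn := norm_nonneg (z - x₀)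
  have hstep : ‖f' xt + μs1 • (xt - x₀)‖ ^ 2
      ≤ 3 * ‖a‖ ^ 2 + 3 * δ ^ 2 * ‖xt - z‖ ^ 2 + 3 * δ ^ 2 * ‖z - x₀‖ ^ 2 := by
    have hS := pow_le_pow_left₀ hvnn hv 2
    nlinarith [sq_nonneg (‖a‖ - δ * ‖xt - z‖), sq_nonneg (‖a‖ - δ * ‖z - x₀‖),
      sq_nonneg (δ * ‖xt - z‖ - δ * ‖z - x₀‖)]
  have hterm2 : 3 * δ ^ 2 * ‖xt - z‖ ^ 2 ≤ 3 * δ ^ 2 / μs ^ 2 * ‖a‖ ^ 2 := by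
    rw [div_mul_eq_mul_div, le_div_iff₀ (by positivity : (0:ℝ) < μs ^ 2)]
    have hsq : (μs * ‖xt - z‖) * (μs * ‖xt - z‖) ≤ ‖a‖ * ‖a‖ :=
      mul_le_mul hkey hkey (by positivity) hann
    nlinarith [mul_le_mul_of_nonneg_left hsq (by positivity : (0:ℝ) ≤ 3 * δ ^ 2)]
  have hterm3 : 3 * δ ^ 2 * ‖z - x₀‖ ^ 2 ≤ 12 * δ ^ 2 * ‖xstar - x₀‖ ^ 2 := by
    nlinarith [sq_nonneg δ, norm_nonneg (xstar - x₀)]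
  calc ‖f' xt + μs1 • (xt - x₀)‖ ^ 2
      ≤ 3 * ‖a‖ ^ 2 + 3 * δ ^ 2 * ‖xt - z‖ ^ 2 + 3 * δ ^ 2 * ‖z - x₀‖ ^ 2 := hstep
    _ ≤ 3 * ‖a‖ ^ 2 + 3 * δ ^ 2 / μs ^ 2 * ‖a‖ ^ 2 + 12 * δ ^ 2 * ‖xstar - x₀‖ ^ 2 := by
        clear_value δ a z
        linarith
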